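/- Fix an integer d ≥ 1 and a real number m with 0 < m < 2. Then f_m(k) > 0 for every k ∈ ℝ^d, so F(k) := ( (Σ_{j=1}^d (cos(2π k_j) − 1) + m)/f_m(k), sin(2π k_1)/f_m(k), …, sin(2π k_d)/f_m(k) ) is a well-defined point of the unit sphere S^d ⊂ ℝ^{d+1}; moreover F(k) = (1, 0, …, 0) if and only if k ∈ ℤ^d. -/

import Mathlib

noncomputable section

/-- A Clifford system `(c_1, …, c_d, γ)` on a complex Hilbert space `H`:
`c_j* = -c_j`, `c_j c_l + c_l c_j = -2 δ_{jl} 1`, `γ* = γ`, `γ² = 1`, `γ c_j = -c_j γ`. -/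
structure CliffordSystem (H : Type*) [NormedAddCommGroup H] [InnerProductSpace ℂ H]
    [CompleteSpace H] (d : ℕ) where
  c : Fin d → H →L[ℂ] H
  γ : H →L[ℂ] H
  c_skew : ∀ j, star (c j) = -c j
  c_rel : ∀ j l, c j * c l + c l * c j =
    if j = l then (-2 : ℂ) • (1 : H →L[ℂ] H) else 0
  γ_sa : star γ = γ
  γ_sq : γ * γ = 1
  γ_anticomm : ∀ j, γ * c j = -(c j * γ)

variable {H : Type*} [NormedAddCommGroup H] [InnerProductSpace ℂ H] [CompleteSpace H]

/-- `x = (U - U*)/(2i)`, the "imaginary part" of a unitary `U`. -/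
def xPart (U : H →L[ℂ] H) : H →L[ℂ] H := ((2 * Complex.I)⁻¹ : ℂ) • (U - star U)

/-- `y = (U + U*)/2`, the "real part" of a unitary `U`. -/
def yPart (U : H →L[ℂ] H) : H →L[ℂ] H := ((2 : ℂ)⁻¹ : ℂ) • (U + star U)

/-- The massive hermitian Wilson--Dirac operator
`D(κ, m) = κ·Σ_j i x_j c_j + γ·(κ·Σ_j (y_j − 1) + m)`. -/
def wilsonDirac {d : ℕ} (cs : CliffordSystem H d) (U : Fin d → H →L[ℂ] H)
    (κ m : ℝ) : H →L[ℂ] H :=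
  (κ : ℂ) • (∑ j, Complex.I • (xPart (U j) * cs.c j)) +
    cs.γ * ((κ : ℂ) • (∑ j, (yPart (U j) - 1)) + (m : ℂ) • (1 : H →L[ℂ] H))

/-- `f_m(k)² = Σ_j sin²(2π k_j) + (Σ_j (cos(2π k_j) − 1) + m)²`. -/
def fmSq (d : ℕ) (m : ℝ) (k : Fin d → ℝ) : ℝ :=
  ∑ j, Real.sin (2 * Real.pi * k j) ^ 2 +
    (∑ j, (Real.cos (2 * Real.pi * k j) - 1) + m) ^ 2

/-- `E_{>0}(A)`: the sum of the eigenspaces of `A` with positive (real) eigenvalue. -/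
def posSpace (A : H →L[ℂ] H) : Submodule ℂ H :=
  ⨆ (μ : ℝ) (_ : 0 < μ), Module.End.eigenspace (A.toLinearMap) (μ : ℂ)

/-- `E_{<0}(A)`: the sum of the eigenspaces of `A` with negative (real) eigenvalue. -/
def negSpace (A : H →L[ℂ] H) : Submodule ℂ H :=
  ⨆ (μ : ℝ) (_ : μ < 0), Module.End.eigenspace (A.toLinearMap) (μ : ℂ)

/-- `𝐈(A) = (dim E_{>0}(A) − dim E_{<0}(A))/2`, a priori a half-integer. -/
def Ind (A : H →L[ℂ] H) : ℚ :=
  ((Module.finrank ℂ (posSpace A) : ℚ) - (Module.finrank ℂ (negSpace A) : ℚ)) / 2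

end

/-- The map `F : ℝ^d → ℝ^{d+1}` from the proof of Proposition 3.7. -/
noncomputable def Fmap (d : ℕ) (m : ℝ) (k : Fin d → ℝ) : Fin (d + 1) → ℝ :=
  Fin.cons ((∑ j, (Real.cos (2 * Real.pi * k j) - 1) + m) / Real.sqrt (fmSq d m k))
    fun j => Real.sin (2 * Real.pi * k j) / Real.sqrt (fmSq d m k)


lemma cos_dichot' {x : ℝ} (h : Real.sin x = 0) : Real.cos x = 1 ∨ Real.cos x = -1 := by
  have h1 := Real.sin_sq_add_cos_sq x
  have h2 : (Real.cos x - 1) * (Real.cos x + 1) = 0 := by nlinarith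
  rcases mul_eq_zero.mp h2 with h3 | h3
  · left; linarith
  · right; linarith

lemma key' (d : ℕ) (m : ℝ) (hm2 : m < 2) (k : Fin d → ℝ)
    (hs : ∀ j, Real.sin (2 * Real.pi * k j) = 0) :
    (∀ j, Real.cos (2 * Real.pi * k j) = 1) ∨
      (∑ j, (Real.cos (2 * Real.pi * k j) - 1)) + m < 0 := by
  by_cases h : ∀ j, Real.cos (2 * Real.pi * k j) = 1
  · exact Or.inl h
  · right
    push_neg at h
    obtain ⟨j, hj⟩ := h
    have hcj : Real.cos (2 * Real.pi * k j) = -1 := by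
      rcases cos_dichot' (hs j) with h1 | h1
      · exact absurd h1 hj
      · exact h1
    have hle : ∀ l ∈ Finset.univ, (0:ℝ) ≤ -(Real.cos (2 * Real.pi * k l) - 1) := by
      intro l _
      have := Real.cos_le_one (2 * Real.pi * k l)
      linarith
    have := Finset.single_le_sum hle (Finset.mem_univ j)
    rw [Finset.sum_neg_distrib, hcj] at this
    linarith

lemma fmSq_pos' (d : ℕ) (m : ℝ) (hm0 : 0 < m) (hm2 : m < 2) (k : Fin d → ℝ) :
    0 < fmSq d m k := by
  rcases (by unfold fmSq; positivity : (0:ℝ) ≤ fmSq d m k).lt_or_eq with h | h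
  · exact h
  exfalso
  have h0 : fmSq d m k = 0 := h.symm
  unfold fmSq at h0
  have hS : (0:ℝ) ≤ ∑ j, Real.sin (2 * Real.pi * k j) ^ 2 := by positivity
  have hT := sq_nonneg (∑ j, (Real.cos (2 * Real.pi * k j) - 1) + m)
  have hS0 : ∑ j, Real.sin (2 * Real.pi * k j) ^ 2 = 0 := by linarith
  have hT0 : (∑ j, (Real.cos (2 * Real.pi * k j) - 1) + m) = 0 := by nlinarith
  have hs : ∀ j, Real.sin (2 * Real.pi * k j) = 0 := by
    intro j
    have := (Finset.sum_eq_zero_iff_of_nonneg (fun i _ => sq_nonneg _)).mp hS0 j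
      (Finset.mem_univ j)
    exact pow_eq_zero_iff two_ne_zero |>.mp this
  rcases key' d m hm2 k hs with hall | hlt
  · have hB : ∑ j, (Real.cos (2 * Real.pi * k j) - 1) = 0 :=
      Finset.sum_eq_zero fun j _ => by rw [hall j]; ring
    rw [hB] at hT0; linarith
  · linarith

/-- `F` is a well-defined map to the sphere `S^d`, hitting the north pole
exactly on the integer lattice. -/
theorem statement4 (d : ℕ) (hd : 1 ≤ d) (m : ℝ) (hm0 : 0 < m) (hm2 : m < 2)
    (k : Fin d → ℝ) :
    0 < Real.sqrt (fmSq d m k) ∧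
    (∑ i, Fmap d m k i ^ 2 = 1) ∧
    ((Fmap d m k = Fin.cons 1 fun _ => 0) ↔ ∀ j, ∃ n : ℤ, k j = (n : ℝ)) := by
  have hpos := fmSq_pos' d m hm0 hm2 k
  have hsqrt : 0 < Real.sqrt (fmSq d m k) := Real.sqrt_pos.mpr hpos
  refine ⟨hsqrt, ?_, ?_, ?_⟩
  · rw [Fin.sum_univ_succ]
    simp only [Fmap, Fin.cons_zero, Fin.cons_succ, div_pow]
    rw [← Finset.sum_div, Real.sq_sqrt hpos.le, ← add_div,
      div_eq_one_iff_eq hpos.ne']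
    unfold fmSq; ring
  · intro hF j
    have hs : ∀ l, Real.sin (2 * Real.pi * k l) = 0 := by
      intro l
      have h1 := congrFun hF l.succ
      simp only [Fmap, Fin.cons_succ] at h1
      exact (div_eq_zero_iff.mp h1).resolve_right hsqrt.ne'
    have hF0 := congrFun hF 0
    simp only [Fmap, Fin.cons_zero] at hF0
    have hB : ∑ l, (Real.cos (2 * Real.pi * k l) - 1) + m = Real.sqrt (fmSq d m k) :=
      (div_eq_one_iff_eq hsqrt.ne').mp hF0
    rcases key' d m hm2 k hs with hall | hlt
    · obtain ⟨n, hn⟩ := (Real.cos_eq_one_iff _).mp (hall j)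
      refine ⟨n, ?_⟩
      have h2 : 2 * Real.pi * k j = 2 * Real.pi * (n : ℝ) := by linarith
      exact (mul_left_cancel₀ (by positivity : (2 * Real.pi) ≠ 0) h2)
    · linarith
  · intro hk
    have hs : ∀ j, Real.sin (2 * Real.pi * k j) = 0 := by
      intro j; obtain ⟨n, hn⟩ := hk j
      rw [hn]
      have h2 : 2 * Real.pi * (n : ℝ) = ((2 * n : ℤ) : ℝ) * Real.pi := by push_cast; ring
      rw [h2]; exact Real.sin_int_mul_pi _
    have hc : ∀ j, Real.cos (2 * Real.pi * k j) = 1 := by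
      intro j; obtain ⟨n, hn⟩ := hk j
      rw [hn]; exact (Real.cos_eq_one_iff _).mpr ⟨n, by ring⟩
    have hB : ∑ j, (Real.cos (2 * Real.pi * k j) - 1) = 0 :=
      Finset.sum_eq_zero fun j _ => by rw [hc j]; ring
    have hS : ∑ j, Real.sin (2 * Real.pi * k j) ^ 2 = 0 :=
      Finset.sum_eq_zero fun j _ => by rw [hs j]; ring
    have hf : fmSq d m k = m ^ 2 := by unfold fmSq; rw [hS, hB]; ring
    have hsqrtm : Real.sqrt (fmSq d m k) = m := by rw [hf, Real.sqrt_sq hm0.le]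
    funext i
    refine Fin.cases ?_ ?_ i
    · simp [Fmap, hsqrtm, hB, div_self hm0.ne']
    · intro j; simp [Fmap, hs j]
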